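/- The sequence 1 → Z(G) → G → W → 1 is exact, where G = ⟨a, b, c ∣ a²b = ba², b²a = ab², a²c = ca², b²c = cb², a²b² = c²⟩, W = ⟨a, b, c ∣ a² = b² = c² = 1⟩, and the map G → W sends each generator to its namesake; i.e., G is a central extension of W by its center. -/

import Mathlib

/-- Relations of the presentation `⟨a,b,c ∣ a²b=ba², b²a=ab², a²c=ca², b²c=cb², a²b²=c²⟩`
of the braid group `B₂(Σ_{1,0})`, as elements of the free group on `a = 0`, `b = 1`, `c = 2`. -/
def grels : Set (FreeGroup (Fin 3)) :=
  { FreeGroup.of 0 ^ 2 * FreeGroup.of 1 * (FreeGroup.of 1 * FreeGroup.of 0 ^ 2)⁻¹,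
    FreeGroup.of 1 ^ 2 * FreeGroup.of 0 * (FreeGroup.of 0 * FreeGroup.of 1 ^ 2)⁻¹,
    FreeGroup.of 0 ^ 2 * FreeGroup.of 2 * (FreeGroup.of 2 * FreeGroup.of 0 ^ 2)⁻¹,
    FreeGroup.of 1 ^ 2 * FreeGroup.of 2 * (FreeGroup.of 2 * FreeGroup.of 1 ^ 2)⁻¹,
    FreeGroup.of 0 ^ 2 * FreeGroup.of 1 ^ 2 * (FreeGroup.of 2 ^ 2)⁻¹ }

/-- Relations `a² = b² = c² = 1` of the universal Coxeter group `W(a,b,c)`. -/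
def wrels : Set (FreeGroup (Fin 3)) :=
  { FreeGroup.of 0 ^ 2, FreeGroup.of 1 ^ 2, FreeGroup.of 2 ^ 2 }

/-- The braid group `B₂(Σ_{1,0})` via the presentation above. -/
abbrev G := PresentedGroup grels

/-- The universal Coxeter group `W(a,b,c) = ℤ/2 * ℤ/2 * ℤ/2`. -/
abbrev W := PresentedGroup wrels

def ga : G := PresentedGroup.of 0
def gb : G := PresentedGroup.of 1
def gc : G := PresentedGroup.of 2
def wa : W := PresentedGroup.of 0
def wb : W := PresentedGroup.of 1
def wc : W := PresentedGroup.of 2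

/- ## Generalities -/

lemma mk_pure {α : Type*} (rels : Set (FreeGroup α)) (x : α) :
    PresentedGroup.mk rels (pure x) = PresentedGroup.of x := rfl

lemma mk_of {α : Type*} (rels : Set (FreeGroup α)) (x : α) :
    PresentedGroup.mk rels (FreeGroup.of x) = PresentedGroup.of x := rfl

/- ## Relations -/

lemma grel_one (r : FreeGroup (Fin 3)) (hr : r ∈ grels) : PresentedGroup.mk grels r = 1 :=
  (QuotientGroup.eq_one_iff _).mpr (Subgroup.subset_normalClosure hr)

lemma wsq (i : Fin 3) : (PresentedGroup.of i : W) ^ 2 = 1 := by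
  have : PresentedGroup.mk wrels (FreeGroup.of i ^ 2) = 1 := by
    apply (QuotientGroup.eq_one_iff _).mpr
    apply Subgroup.subset_normalClosure
    fin_cases i
    · exact Set.mem_insert _ _
    · exact Set.mem_insert_of_mem _ (Set.mem_insert _ _)
    · exact Set.mem_insert_of_mem _ (Set.mem_insert_of_mem _ rfl)
  simpa [map_pow, mk_of] using this

lemma winv (i : Fin 3) : (PresentedGroup.of i : W)⁻¹ = PresentedGroup.of i :=
  inv_eq_of_mul_eq_one_left (by rw [← sq]; exact wsq i)

lemma gcomm (i j : Fin 3)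
    (h : FreeGroup.of i ^ 2 * FreeGroup.of j * (FreeGroup.of j * FreeGroup.of i ^ 2)⁻¹ ∈ grels) :
    Commute ((PresentedGroup.of i : G) ^ 2) (PresentedGroup.of j) := by
  have := grel_one _ h
  simp only [map_mul, map_inv, map_pow, mk_of] at this
  exact mul_inv_eq_one.mp this

lemma central_of_comm {x : G} (h : ∀ j : Fin 3, Commute x (PresentedGroup.of j)) :
    x ∈ Subgroup.center G := by
  rw [Subgroup.mem_center_iff]
  intro g
  induction g using PresentedGroup.induction_on with
  | _ z =>
    induction z with
    | C1 => simp
    | of j => rw [mk_of]; exact ((h j).symm).eq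
    | inv_of j _ => rw [map_inv, mk_of]; exact (((h j).inv_right).symm).eq
    | mul y₁ y₂ h₁ h₂ => rw [map_mul, mul_assoc, h₂, ← mul_assoc, h₁, mul_assoc]

lemma gsq_central (i : Fin 3) : (PresentedGroup.of i : G) ^ 2 ∈ Subgroup.center G := by
  have c01 : Commute ((PresentedGroup.of 0 : G) ^ 2) (PresentedGroup.of 1) :=
    gcomm 0 1 (Set.mem_insert _ _)
  have c10 : Commute ((PresentedGroup.of 1 : G) ^ 2) (PresentedGroup.of 0) :=
    gcomm 1 0 (Set.mem_insert_of_mem _ (Set.mem_insert _ _))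
  have c02 : Commute ((PresentedGroup.of 0 : G) ^ 2) (PresentedGroup.of 2) :=
    gcomm 0 2 (Set.mem_insert_of_mem _ (Set.mem_insert_of_mem _ (Set.mem_insert _ _)))
  have c12 : Commute ((PresentedGroup.of 1 : G) ^ 2) (PresentedGroup.of 2) :=
    gcomm 1 2 (Set.mem_insert_of_mem _ (Set.mem_insert_of_mem _
      (Set.mem_insert_of_mem _ (Set.mem_insert _ _))))
  have hc2 : (PresentedGroup.of 2 : G) ^ 2
      = (PresentedGroup.of 0 : G) ^ 2 * (PresentedGroup.of 1 : G) ^ 2 := by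
    have := grel_one _ (show FreeGroup.of 0 ^ 2 * FreeGroup.of 1 ^ 2 * (FreeGroup.of 2 ^ 2)⁻¹
        ∈ grels from Set.mem_insert_of_mem _ (Set.mem_insert_of_mem _
          (Set.mem_insert_of_mem _ (Set.mem_insert_of_mem _ rfl))))
    simp only [map_mul, map_inv, map_pow, mk_of] at this
    exact (mul_inv_eq_one.mp this).symm
  have h0 : (PresentedGroup.of 0 : G) ^ 2 ∈ Subgroup.center G := by
    apply central_of_comm
    intro j; fin_cases j
    · exact (Commute.refl _).pow_left 2
    · exact c01
    · exact c02
  have h1 : (PresentedGroup.of 1 : G) ^ 2 ∈ Subgroup.center G := by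
    apply central_of_comm
    intro j; fin_cases j
    · exact c10
    · exact (Commute.refl _).pow_left 2
    · exact c12
  fin_cases i
  · exact h0
  · exact h1
  · show (PresentedGroup.of 2 : G) ^ 2 ∈ Subgroup.center G
    rw [hc2]
    exact Subgroup.mul_mem _ h0 h1

/- ## A faithful-enough action of W on reduced words -/

def sigList (i : Fin 3) : List (Fin 3) → List (Fin 3)
  | [] => [i]
  | x :: t => if x = i then t else i :: x :: t

lemma sigList_chain (i : Fin 3) (l : List (Fin 3)) (h : l.Chain' (· ≠ ·)) :
    (sigList i l).Chain' (· ≠ ·) := by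
  rcases l with _ | ⟨x, t⟩
  · simp [sigList, List.Chain']
  · by_cases hx : x = i
    · simpa [sigList, hx, List.Chain'] using h.tail
    · simpa [sigList, hx, List.Chain'] using List.isChain_cons_cons.mpr ⟨fun he => hx he.symm, h⟩

abbrev RW := {l : List (Fin 3) // l.Chain' (· ≠ ·)}

def sigFun (i : Fin 3) (l : RW) : RW := ⟨sigList i l.1, sigList_chain i l.1 l.2⟩

lemma sig_invol (i : Fin 3) : Function.Involutive (sigFun i) := by
  rintro ⟨(_ | ⟨x, t⟩), h⟩ <;> apply Subtype.ext
  · simp [sigFun, sigList]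
  · by_cases hx : x = i
    · subst hx
      rcases t with _ | ⟨y, t'⟩
      · simp [sigFun, sigList]
      · have hy : y ≠ x := (List.isChain_cons_cons.mp h).1.symm
        simp [sigFun, sigList, hy]
    · simp [sigFun, sigList, hx]

def sig (i : Fin 3) : Equiv.Perm RW := (sig_invol i).toPerm

lemma sig_apply (i : Fin 3) (l : RW) : sig i l = sigFun i l := rfl

lemma sig_sq (i : Fin 3) : sig i ^ 2 = 1 := by
  apply Equiv.ext
  intro l
  rw [sq]
  exact sig_invol i l

def rho : W →* Equiv.Perm RW :=
  PresentedGroup.toGroup (f := sig) (by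
    intro r hr
    rcases hr with h | h | h <;> subst h <;>
      simpa [map_pow] using sig_sq _)

lemma rho_of (i : Fin 3) : rho (PresentedGroup.of i) = sig i := PresentedGroup.toGroup.of _

def ws (m : List (Fin 3)) : W := (m.map (fun i => (PresentedGroup.of i : W))).prod

@[simp] lemma ws_nil : ws [] = 1 := rfl
@[simp] lemma ws_cons (i : Fin 3) (m : List (Fin 3)) :
    ws (i :: m) = PresentedGroup.of i * ws m := by simp [ws]
lemma ws_append (m₁ m₂ : List (Fin 3)) : ws (m₁ ++ m₂) = ws m₁ * ws m₂ := by
  simp [ws]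

lemma sig_gen (i : Fin 3) (l : RW) : ws (sig i l).1 = PresentedGroup.of i * ws l.1 := by
  obtain ⟨(_ | ⟨x, t⟩), h⟩ := l
  · simp [sig_apply, sigFun, sigList]
  · by_cases hx : x = i
    · subst hx
      have h1 : ((sig x) ⟨x :: t, h⟩ : RW).1 = t := by simp [sig_apply, sigFun, sigList]
      rw [h1]
      show ws t = PresentedGroup.of x * ws (x :: t)
      rw [ws_cons, ← mul_assoc, ← sq, wsq, one_mul]
    · have h1 : ((sig i) ⟨x :: t, h⟩ : RW).1 = i :: x :: t := by
        simp [sig_apply, sigFun, sigList, hx]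
      rw [h1]
      show ws (i :: x :: t) = PresentedGroup.of i * ws (x :: t)
      rw [ws_cons]

lemma key1 (w : W) : ∀ l : RW, ws (rho w l).1 = w * ws l.1 := by
  induction w using PresentedGroup.induction_on with
  | _ z =>
    induction z with
    | C1 => intro l; simp
    | of x => intro l; rw [mk_of, rho_of]; exact sig_gen x l
    | inv_of x _ => intro l; rw [map_inv, mk_of, winv, rho_of]; exact sig_gen x l
    | mul x y hx hy =>
        intro l
        rw [map_mul, map_mul, Equiv.Perm.mul_apply, hx, hy, mul_assoc]

lemma key2 : ∀ m : List (Fin 3), (h : m.Chain' (· ≠ ·)) →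
    rho (ws m) ⟨[], List.isChain_nil⟩ = ⟨m, h⟩ := by
  intro m
  induction m with
  | nil => intro h; simp
  | cons i t ih =>
      intro h
      rw [ws_cons, map_mul, Equiv.Perm.mul_apply, ih h.tail, rho_of]
      apply Subtype.ext
      rcases t with _ | ⟨x, t'⟩
      · simp [sig_apply, sigFun, sigList]
      · have hx : x ≠ i := (List.isChain_cons_cons.mp h).1.symm
        simp [sig_apply, sigFun, sigList, hx]

lemma exists_j (a b : Fin 3) : ∃ j : Fin 3, j ≠ a ∧ j ≠ b := by fin_cases a <;> fin_cases b <;> decide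

lemma W_eq_one_of_comm {z : W} (hz : ∀ i : Fin 3, Commute (PresentedGroup.of i) z) :
    z = 1 := by
  have hzl : ws (rho z ⟨[], List.isChain_nil⟩).1 = z := by
    simpa using key1 z ⟨[], List.isChain_nil⟩
  rcases hL : (rho z ⟨[], List.isChain_nil⟩).1 with _ | ⟨x, t⟩
  · rw [hL] at hzl; simpa using hzl.symm
  · exfalso
    have hl : (x :: t).Chain' (· ≠ ·) := hL ▸ (rho z ⟨[], List.isChain_nil⟩).2
    have hzl' : ws (x :: t) = z := by rw [← hL]; exact hzl
    obtain ⟨j, hj1, hj2⟩ := exists_j x ((x :: t).getLast (by simp))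
    have hch2 : ((x :: t) ++ [j]).Chain' (· ≠ ·) := by
      rw [List.Chain', List.isChain_append]
      refine ⟨hl, List.isChain_singleton j, ?_⟩
      intro a ha b hb
      rw [List.getLast?_eq_getLast_of_ne_nil (by simp)] at ha
      simp only [List.head?_cons, Option.mem_def, Option.some.injEq] at ha hb
      subst ha; subst hb
      exact fun he => hj2 he.symm
    have e1 : (rho (PresentedGroup.of j * z) ⟨[], List.isChain_nil⟩).1 = j :: x :: t := by
      rw [map_mul, Equiv.Perm.mul_apply,
        show rho z ⟨[], List.isChain_nil⟩ = ⟨x :: t, hl⟩ from Subtype.ext hL, rho_of]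
      have hxj : ¬ (x = j) := fun he => hj1 he.symm
      simp [sig_apply, sigFun, sigList, hxj]
    have e2 : (rho (z * PresentedGroup.of j) ⟨[], List.isChain_nil⟩).1 = (x :: t) ++ [j] := by
      have hzj : z * PresentedGroup.of j = ws ((x :: t) ++ [j]) := by
        rw [ws_append, hzl']; simp [ws]
      rw [hzj, key2 _ hch2]
    rw [(hz j).eq, e2] at e1
    rw [List.cons_append] at e1
    injection e1 with h1 h2
    exact hj1 h1.symm


theorem stmt_14 (p : G →* W) (hpa : p ga = wa) (hpb : p gb = wb) (hpc : p gc = wc) :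
    Function.Surjective p ∧ p.ker = Subgroup.center G := by
  have hcomp : p.comp (PresentedGroup.mk grels) = PresentedGroup.mk wrels := by
    apply FreeGroup.ext_hom
    intro i
    fin_cases i
    · simpa [mk_of, ga, wa] using hpa
    · simpa [mk_of, gb, wb] using hpb
    · simpa [mk_of, gc, wc] using hpc
  constructor
  · intro w
    induction w using PresentedGroup.induction_on with
    | _ z => exact ⟨PresentedGroup.mk grels z, DFunLike.congr_fun hcomp z⟩
  · apply le_antisymm
    · intro x hx
      obtain ⟨z, rfl⟩ := PresentedGroup.mk_surjective grels x
      have hz1 : PresentedGroup.mk wrels z = 1 := by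
        rw [← hcomp]
        exact MonoidHom.mem_ker.mp hx
      have hz2 : z ∈ Subgroup.normalClosure wrels := (QuotientGroup.eq_one_iff z).mp hz1
      have hle : Subgroup.normalClosure wrels
          ≤ (Subgroup.center G).comap (PresentedGroup.mk grels) := by
        apply Subgroup.normalClosure_le_normal
        rintro r (h | h | h) <;> subst h <;>
          · rw [SetLike.mem_coe, Subgroup.mem_comap, map_pow, mk_of]
            exact gsq_central _
      exact hle hz2
    · intro x hx
      rw [MonoidHom.mem_ker]
      apply W_eq_one_of_comm
      intro i
      have hc := Subgroup.mem_center_iff.mp hx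
      fin_cases i
      · show wa * p x = p x * wa
        rw [← hpa, ← map_mul, hc ga, map_mul]
      · show wb * p x = p x * wb
        rw [← hpb, ← map_mul, hc gb, map_mul]
      · show wc * p x = p x * wc
        rw [← hpc, ← map_mul, hc gc, map_mul]
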